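/- Let N be an even natural number. The map described below is a bijection from Z²_N onto BP^{N/2}_{2,2}: each string 2a, …, 2a of odd length, or of even length with label 1, is replaced by a, …, a of the same length; each string 2a, …, 2a of even length with label 0 is replaced by a−1, a+1, a−1, a+1, …, a−1, a+1 of the same length; each string 2a+1, …, 2a+1 (necessarily of even length) is replaced by a, a+1, a, a+1, …, a, a+1 of the same length; the resulting entries form a bipartition of N/2 of excess (2,2). -/

import Mathlib

/-- A sequence of naturals that is eventually zero. -/
def EventuallyZero (l : ℕ → ℕ) : Prop := ∃ N, ∀ m, N ≤ m → l m = 0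

/-- A bipartition: eventually zero, with `λ₁ ≥ λ₃ ≥ …` and `λ₂ ≥ λ₄ ≥ …`
(0-indexed: `l i = λ_{i+1}`). -/
def IsBipartition (l : ℕ → ℕ) : Prop :=
  EventuallyZero l ∧ ∀ i, l (i + 2) ≤ l i

/-- A partition: eventually zero and weakly decreasing. -/
def IsPartitionSeq (l : ℕ → ℕ) : Prop :=
  EventuallyZero l ∧ ∀ i, l (i + 1) ≤ l i

/-- `λ` has excess `(e, e')`: `λᵢ + e ≥ λᵢ₊₁` for odd (paper) `i`,
`λᵢ + e' ≥ λᵢ₊₁` for even (paper) `i`.  With 0-based indices, paper-odd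
positions are the even Lean indices. -/
def HasExcess (e e' : ℕ) (l : ℕ → ℕ) : Prop :=
  ∀ i, (Even i → l (i + 1) ≤ l i + e) ∧ (Odd i → l (i + 1) ≤ l i + e')

/-- The (finite) sum of an eventually zero sequence is `n`. -/
def SumsTo (l : ℕ → ℕ) (n : ℕ) : Prop :=
  ∃ N, (∀ m, N ≤ m → l m = 0) ∧ ∑ i ∈ Finset.range N, l i = n

/-- Starting index of the maximal run (string) of entries equal to `ν i`. -/
noncomputable def strStart (ν : ℕ → ℕ) (i : ℕ) : ℕ := sInf {j | ν j = ν i}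

/-- Length of the string of entries equal to `ν i`. -/
noncomputable def strLen (ν : ℕ → ℕ) (i : ℕ) : ℕ := {j | ν j = ν i}.ncard

/-- Every odd part occurs an even number of times. -/
def OddPartsEvenMult (ν : ℕ → ℕ) : Prop := ∀ c, Odd c → Even ({i | ν i = c}.ncard)

/-- Every even positive part occurs an even number of times. -/
def EvenPartsEvenMult (ν : ℕ → ℕ) : Prop :=
  ∀ c, 0 < c → Even c → Even ({i | ν i = c}.ncard)


/-- Labels are attached exactly to even positive part values occurring an even
positive number of times; elsewhere the label is (normalized to) false. -/
def LabelOk (ν : ℕ → ℕ) (lab : ℕ → Bool) : Prop :=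
  ∀ c, ¬(0 < c ∧ Even c ∧ 0 < ({i | ν i = c}.ncard) ∧ Even ({i | ν i = c}.ncard)) →
    lab c = false

/-- The substitution of 3.4(b): strings 2a,...,2a of odd length or label 1 become
a,...,a; strings 2a,...,2a of even length and label 0 become a-1,a+1,...;
strings 2a+1,...,2a+1 become a,a+1,.... -/
noncomputable def T3 (p : (ℕ → ℕ) × (ℕ → Bool)) : ℕ → ℕ := fun i =>
  if p.1 i = 0 then 0
  else if p.1 i % 2 = 1 then
    (if (i - strStart p.1 i) % 2 = 0 then p.1 i / 2 else p.1 i / 2 + 1)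
  else if Odd (strLen p.1 i) ∨ p.2 (p.1 i) = true then p.1 i / 2
  else if (i - strStart p.1 i) % 2 = 0 then p.1 i / 2 - 1 else p.1 i / 2 + 1

namespace Z2BP

def GoodP (p : (ℕ → ℕ) × (ℕ → Bool)) : Prop :=
  IsPartitionSeq p.1 ∧ OddPartsEvenMult p.1 ∧ LabelOk p.1 p.2

/-- least index whose value drops below `c` -/
noncomputable def bd (ν : ℕ → ℕ) (c : ℕ) : ℕ := sInf {j | ν j < c}

section Basic
variable {ν : ℕ → ℕ} {c d i j : ℕ}

lemma mono_of (h : ∀ i, ν (i+1) ≤ ν i) : ∀ {i j}, i ≤ j → ν j ≤ ν i :=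
  fun hij => antitone_nat_of_succ_le h hij

lemma bd_le_iff (hm : ∀ i, ν (i+1) ≤ ν i) (hz : EventuallyZero ν) (hc : 0 < c) :
    bd ν c ≤ j ↔ ν j < c := by
  obtain ⟨N, hN⟩ := hz
  have hne : {j | ν j < c}.Nonempty := ⟨N, by simp [hN N le_rfl, hc]⟩
  constructor
  · intro h
    exact lt_of_le_of_lt (mono_of hm h) (Nat.sInf_mem hne)
  · exact fun h => Nat.sInf_le h

lemma lt_bd_iff (hm : ∀ i, ν (i+1) ≤ ν i) (hz : EventuallyZero ν) (hc : 0 < c) :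
    j < bd ν c ↔ c ≤ ν j := by
  rw [← not_le, bd_le_iff hm hz hc, not_lt]

lemma fiber_eq (hm : ∀ i, ν (i+1) ≤ ν i) (hz : EventuallyZero ν) (hc : 0 < c) :
    {j | ν j = c} = Set.Ico (bd ν (c+1)) (bd ν c) := by
  ext j
  simp only [Set.mem_setOf_eq, Set.mem_Ico]
  rw [bd_le_iff hm hz (show 0 < c + 1 by omega), lt_bd_iff hm hz hc]
  omega

lemma str_mem (hm : ∀ i, ν (i+1) ≤ ν i) (hz : EventuallyZero ν) (hi : 0 < ν i) :
    bd ν (ν i + 1) ≤ i ∧ i < bd ν (ν i) := by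
  rw [bd_le_iff hm hz (by omega), lt_bd_iff hm hz hi]
  omega

lemma strStart_eq (hm : ∀ i, ν (i+1) ≤ ν i) (hz : EventuallyZero ν) (hi : 0 < ν i) :
    strStart ν i = bd ν (ν i + 1) := by
  have h := str_mem hm hz hi
  rw [strStart, fiber_eq hm hz hi]
  refine le_antisymm (Nat.sInf_le ⟨le_rfl, lt_of_le_of_lt h.1 h.2⟩) ?_
  exact le_csInf ⟨i, h.1, h.2⟩ (fun x hx => hx.1)

lemma strLen_eq (hm : ∀ i, ν (i+1) ≤ ν i) (hz : EventuallyZero ν) (hi : 0 < ν i) :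
    strLen ν i = bd ν (ν i) - bd ν (ν i + 1) := by
  rw [strLen, fiber_eq hm hz hi, ← Finset.coe_Ico, Set.ncard_coe_finset, Nat.card_Ico]

end Basic

/-- value of `T3` in terms of block data -/
noncomputable def blockVal (v k : ℕ) (lb : Bool) (off : ℕ) : ℕ :=
  if v % 2 = 1 then (if off % 2 = 0 then v / 2 else v / 2 + 1)
  else if Odd k ∨ lb = true then v / 2
  else if off % 2 = 0 then v / 2 - 1 else v / 2 + 1

lemma T3_zero {p : (ℕ → ℕ) × (ℕ → Bool)} {i : ℕ} (h : p.1 i = 0) : T3 p i = 0 := by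
  simp [T3, h]

lemma T3_eq' {p : (ℕ → ℕ) × (ℕ → Bool)} {i : ℕ}
    (hm : ∀ i, p.1 (i+1) ≤ p.1 i) (hz : EventuallyZero p.1) (hi : 0 < p.1 i) :
    T3 p i = blockVal (p.1 i) (bd p.1 (p.1 i) - bd p.1 (p.1 i + 1)) (p.2 (p.1 i))
      (i - bd p.1 (p.1 i + 1)) := by
  rw [T3, blockVal, if_neg (by omega), strStart_eq hm hz hi, strLen_eq hm hz hi]

lemma blockVal_le {v k off : ℕ} {lb : Bool} : blockVal v k lb off ≤ v / 2 + 1 := by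
  unfold blockVal; split_ifs <;> omega

lemma blockVal_ge {v k off : ℕ} {lb : Bool} (hv : 0 < v) :
    (v - 1) / 2 ≤ blockVal v k lb off := by
  unfold blockVal; split_ifs <;> omega

lemma blockVal_start {v k off : ℕ} {lb : Bool} (ho : off % 2 = 0) :
    blockVal v k lb off ≤ v / 2 := by
  unfold blockVal; split_ifs <;> omega

lemma blockVal_parity {v k off off' : ℕ} {lb : Bool} (h : off % 2 = off' % 2) :
    blockVal v k lb off = blockVal v k lb off' := by
  unfold blockVal; rw [h]

end Z2BP

namespace Z2BP

section Fwd
variable {p : (ℕ → ℕ) × (ℕ → Bool)}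

lemma bd_succ_eq {ν : ℕ → ℕ} {j u : ℕ} (hm : ∀ i, ν (i+1) ≤ ν i)
    (hz : EventuallyZero ν) (hj : ν j = u) (hu : 0 < u)
    (h : j = 0 ∨ u < ν (j-1)) : bd ν (u+1) = j := by
  refine le_antisymm ((bd_le_iff hm hz (by omega)).2 (by omega)) ?_
  rcases h with h | h
  · omega
  · have : j - 1 < bd ν (u + 1) := (lt_bd_iff hm hz (by omega)).2 (by omega)
    rcases Nat.eq_zero_or_pos j with h0 | h0
    · omega
    · omega

lemma strLen_even_of_odd (hP : GoodP p) {i : ℕ} (hc : p.1 i % 2 = 1) :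
    (bd p.1 (p.1 i) - bd p.1 (p.1 i + 1)) % 2 = 0 := by
  obtain ⟨⟨hz, hm⟩, hOdd, _⟩ := hP
  rw [← strLen_eq hm hz (by omega), strLen, ← Nat.even_iff]
  exact hOdd _ (Nat.odd_iff.2 hc)

/-- value at the last index of a string -/
lemma lastVal (hP : GoodP p) {i : ℕ} (hi : 0 < p.1 i)
    (hlast : bd p.1 (p.1 i) = i + 1) :
    p.1 i / 2 ≤ T3 p i ∧ (p.1 i % 2 = 1 → T3 p i = p.1 i / 2 + 1) := by
  obtain ⟨⟨hz, hm⟩, hOdd, hLab⟩ := hP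
  have hmem := str_mem hm hz hi
  have hoff : i - bd p.1 (p.1 i + 1) = (bd p.1 (p.1 i) - bd p.1 (p.1 i + 1)) - 1 := by
    omega
  rw [T3_eq' hm hz hi, hoff]
  set K := bd p.1 (p.1 i) - bd p.1 (p.1 i + 1) with hK
  have hK1 : 0 < K := by omega
  rcases Nat.eq_zero_or_pos (p.1 i % 2) with hpar | hpar
  · -- even value
    unfold blockVal
    rw [if_neg (by omega)]
    split_ifs with h1 h2
    · exact ⟨le_rfl, by omega⟩
    · rw [Nat.odd_iff, not_or] at h1
      omega
    · exact ⟨by omega, by omega⟩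
  · -- odd value
    have hKeven : K % 2 = 0 := strLen_even_of_odd ⟨⟨hz, hm⟩, hOdd, hLab⟩ (by omega)
    unfold blockVal
    rw [if_pos (by omega), if_neg (by omega)]
    exact ⟨by omega, fun _ => rfl⟩

lemma T3_bip (hP : GoodP p) : ∀ i, T3 p (i+2) ≤ T3 p i := by
  obtain ⟨⟨hz, hm⟩, hOdd, hLab⟩ := hP
  intro i
  rcases Nat.eq_zero_or_pos (p.1 i) with hc | hc
  · have h2 : p.1 (i+2) = 0 := by
      have := mono_of hm (show i ≤ i + 2 by omega); omega
    rw [T3_zero hc, T3_zero h2]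
  rcases Nat.eq_zero_or_pos (p.1 (i+2)) with hw | hw
  · rw [T3_zero hw]; omega
  have hwc : p.1 (i+2) ≤ p.1 i := mono_of hm (by omega)
  have humid : p.1 (i+2) ≤ p.1 (i+1) ∧ p.1 (i+1) ≤ p.1 i := by
    constructor
    · exact hm (i+1)
    · exact hm i
  by_cases hsame : p.1 (i+2) = p.1 i
  · -- same string
    rw [T3_eq' hm hz hc, T3_eq' hm hz hw, hsame]
    have hmem := str_mem hm hz hc
    exact le_of_eq (blockVal_parity (by omega))
  · have hwlt : p.1 (i+2) < p.1 i := by omega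
    by_cases hu : p.1 (i+1) = p.1 i
    · -- i+2 starts its string
      have hstart : bd p.1 (p.1 (i+2) + 1) = i + 2 :=
        bd_succ_eq hm hz rfl hw (Or.inr (by simp only [show i + 2 - 1 = i + 1 by omega]; omega))
      have h1 : T3 p (i+2) ≤ p.1 (i+2) / 2 := by
        rw [T3_eq' hm hz hw, hstart]
        exact blockVal_start (by omega)
      have h2 : (p.1 i - 1) / 2 ≤ T3 p i := by
        rw [T3_eq' hm hz hc]; exact blockVal_ge hc
      have h3 : p.1 (i+2) / 2 ≤ (p.1 i - 1) / 2 := by omega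
      omega
    · by_cases huw : p.1 (i+1) = p.1 (i+2)
      · -- i is last in its string, i+2 is second in next string
        have hlast : bd p.1 (p.1 i) = i + 1 := by
          refine le_antisymm ((bd_le_iff hm hz hc).2 (by omega)) ?_
          have := (str_mem hm hz hc).2; omega
        have hL := lastVal ⟨⟨hz, hm⟩, hOdd, hLab⟩ hc hlast
        have h1 : T3 p (i+2) ≤ p.1 (i+2) / 2 + 1 := by
          rw [T3_eq' hm hz hw]; exact blockVal_le
        rcases Nat.eq_zero_or_pos (p.1 i % 2) with hpar | hpar
        · omega
        · have := hL.2 (by omega); omega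
      · -- i+2 starts its string (after a singleton string at i+1)
        have hstart : bd p.1 (p.1 (i+2) + 1) = i + 2 :=
          bd_succ_eq hm hz rfl hw (Or.inr (by simp only [show i + 2 - 1 = i + 1 by omega]; omega))
        have h1 : T3 p (i+2) ≤ p.1 (i+2) / 2 := by
          rw [T3_eq' hm hz hw, hstart]
          exact blockVal_start (by omega)
        have h2 : (p.1 i - 1) / 2 ≤ T3 p i := by
          rw [T3_eq' hm hz hc]; exact blockVal_ge hc
        omega

lemma T3_exc (hP : GoodP p) : ∀ i, T3 p (i+1) ≤ T3 p i + 2 := by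
  obtain ⟨⟨hz, hm⟩, hOdd, hLab⟩ := hP
  intro i
  rcases Nat.eq_zero_or_pos (p.1 (i+1)) with hw | hw
  · rw [T3_zero hw]; omega
  have hc : 0 < p.1 i := lt_of_lt_of_le hw (hm i)
  have h1 : T3 p (i+1) ≤ p.1 (i+1) / 2 + 1 := by
    rw [T3_eq' hm hz hw]; exact blockVal_le
  have h2 : (p.1 i - 1) / 2 ≤ T3 p i := by
    rw [T3_eq' hm hz hc]; exact blockVal_ge hc
  have h3 := hm i
  omega

end Fwd
end Z2BP

namespace Z2BP
section Sum
variable {p : (ℕ → ℕ) × (ℕ → Bool)}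

lemma fiber_ncard {ν : ℕ → ℕ} {c : ℕ} (hm : ∀ i, ν (i+1) ≤ ν i)
    (hz : EventuallyZero ν) (hc : 0 < c) :
    {j | ν j = c}.ncard = bd ν c - bd ν (c+1) := by
  rw [fiber_eq hm hz hc, ← Finset.coe_Ico, Set.ncard_coe_finset, Nat.card_Ico]

lemma sum_alt (m x y : ℕ) :
    ∑ i ∈ Finset.range (2*m), (if i % 2 = 0 then x else y) = m * (x + y) := by
  induction m with
  | zero => simp
  | succ n ih =>
    have h : 2 * (n+1) = (2*n + 1) + 1 := by omega
    have h1 : (2*n) % 2 = 0 := by omega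
    have h2 : (2*n+1) % 2 = 1 := by omega
    rw [h, Finset.sum_range_succ, Finset.sum_range_succ, ih]
    simp [h1, h2]
    ring

lemma sum_string (hP : GoodP p) {a b c : ℕ} (hc : 0 < c)
    (ha : a = bd p.1 (c+1)) (hb : b = bd p.1 c) :
    2 * ∑ j ∈ Finset.Ico a b, T3 p j = (b - a) * c := by
  obtain ⟨⟨hz, hm⟩, hOdd, hLab⟩ := hP
  have hval : ∀ j ∈ Finset.Ico a b, p.1 j = c := by
    intro j hj
    rw [Finset.mem_Ico] at hj
    have h1 : p.1 j < c + 1 := by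
      rw [← bd_le_iff hm hz (show 0 < c+1 by omega), ← ha]; exact hj.1
    have h2 : c ≤ p.1 j := by
      rw [← lt_bd_iff hm hz hc, ← hb]; exact hj.2
    omega
  have hT : ∀ j ∈ Finset.Ico a b, T3 p j = blockVal c (b - a) (p.2 c) (j - a) := by
    intro j hj
    have hj' := hval j hj
    rw [T3_eq' hm hz (by omega), hj', ← ha, ← hb]
  rw [Finset.sum_congr rfl hT, Finset.sum_Ico_eq_sum_range]
  simp only [Nat.add_sub_cancel_left]
  rcases Nat.eq_zero_or_pos (b - a) with hK | hK
  · simp [hK]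
  have hNE : {j | p.1 j = c}.Nonempty := ⟨a, by
    apply hval; rw [Finset.mem_Ico]; omega⟩
  have hncard : {j | p.1 j = c}.ncard = b - a := by
    rw [fiber_ncard hm hz hc, ha, hb]
  rcases Nat.eq_zero_or_pos (c % 2) with hpar | hpar
  · -- c even
    by_cases hC : Odd (b - a) ∨ p.2 c = true
    · have : ∀ i ∈ Finset.range (b - a), blockVal c (b-a) (p.2 c) i = c / 2 := by
        intro i _
        unfold blockVal
        rw [if_neg (by omega), if_pos hC]
      rw [Finset.sum_congr rfl this, Finset.sum_const, Finset.card_range, smul_eq_mul]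
      have h2 : 2 * (c / 2) = c := by omega
      calc 2 * ((b-a) * (c/2)) = (b-a) * (2 * (c/2)) := by ring
        _ = (b-a)*c := by rw [h2]
    · have hKe : (b - a) % 2 = 0 := by
        rw [not_or, Nat.odd_iff] at hC; omega
      obtain ⟨m, hmm⟩ : ∃ m, b - a = 2 * m := ⟨(b-a)/2, by omega⟩
      have : ∀ i ∈ Finset.range (b - a), blockVal c (b-a) (p.2 c) i
          = (if i % 2 = 0 then c/2 - 1 else c/2 + 1) := by
        intro i _
        unfold blockVal
        rw [if_neg (by omega), if_neg hC]
      rw [Finset.sum_congr rfl this, hmm, sum_alt]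
      have h2 : c / 2 - 1 + (c / 2 + 1) = c := by omega
      rw [h2]; ring
  · -- c odd
    have hKe : Even ((b-a)) := by
      rw [← hncard]; exact hOdd c (Nat.odd_iff.2 (by omega))
    obtain ⟨m, hmm⟩ : ∃ m, b - a = 2 * m := ⟨(b-a)/2, by
      rcases hKe with ⟨t, ht⟩; omega⟩
    have : ∀ i ∈ Finset.range (b - a), blockVal c (b-a) (p.2 c) i
        = (if i % 2 = 0 then c/2 else c/2 + 1) := by
      intro i _
      unfold blockVal
      rw [if_pos (by omega)]
    rw [Finset.sum_congr rfl this, hmm, sum_alt]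
    have h2 : c / 2 + (c / 2 + 1) = c := by omega
    rw [h2]; ring

lemma sum_bd (hP : GoodP p) : ∀ M, ∀ c, 0 < c → M = bd p.1 c →
    2 * ∑ j ∈ Finset.range M, T3 p j = ∑ j ∈ Finset.range M, p.1 j := by
  obtain ⟨⟨hz, hm⟩, hOdd, hLab⟩ := hP
  intro M
  induction M using Nat.strong_induction_on with
  | _ M ih =>
    intro c hc hM
    rcases Nat.eq_zero_or_pos M with h0 | h0
    · simp [h0]
    set c₁ := p.1 (M-1) with hc₁
    have hge : c ≤ c₁ := by
      rw [hc₁, ← lt_bd_iff hm hz hc, ← hM]; omega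
    have hbd1 : bd p.1 c₁ = M := by
      refine le_antisymm ((bd_le_iff hm hz (by omega)).2 ?_) ?_
      · have : p.1 M < c := by rw [← bd_le_iff hm hz hc, ← hM]
        omega
      · have : M - 1 < bd p.1 c₁ := (lt_bd_iff hm hz (by omega)).2 (le_refl _)
        omega
    set a := bd p.1 (c₁ + 1) with hA
    have haM : a ≤ M - 1 := by
      rw [hA, bd_le_iff hm hz (by omega)]; omega
    have haM' : a < M := by omega
    have hsum1 := sum_string ⟨⟨hz, hm⟩, hOdd, hLab⟩ (show 0 < c₁ by omega) hA hbd1.symm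
    have hsum2 : ∑ j ∈ Finset.Ico a M, p.1 j = (M - a) * c₁ := by
      have hval : ∀ j ∈ Finset.Ico a M, p.1 j = c₁ := by
        intro j hj
        rw [Finset.mem_Ico] at hj
        have h1 : p.1 j < c₁ + 1 := by
          rw [← bd_le_iff hm hz (show 0 < c₁+1 by omega), ← hA]; exact hj.1
        have h2 : c₁ ≤ p.1 j := by
          rw [← lt_bd_iff hm hz (by omega), hbd1]; exact hj.2
        omega
      rw [Finset.sum_congr rfl hval, Finset.sum_const, Nat.card_Ico, smul_eq_mul]
    have hIH := ih a haM' (c₁ + 1) (by omega) hA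
    have hsplit : ∀ f : ℕ → ℕ, ∑ j ∈ Finset.range M, f j
        = ∑ j ∈ Finset.range a, f j + ∑ j ∈ Finset.Ico a M, f j := by
      intro f
      rw [Finset.sum_range_add_sum_Ico _ (le_of_lt haM')]
    rw [hsplit, hsplit, Nat.left_distrib, hIH, hsum1, hsum2]

lemma sum_all (hP : GoodP p) {M : ℕ} (h : ∀ j, M ≤ j → p.1 j = 0) :
    2 * ∑ j ∈ Finset.range M, T3 p j = ∑ j ∈ Finset.range M, p.1 j := by
  obtain ⟨⟨hz, hm⟩, hOdd, hLab⟩ := hP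
  set M₀ := bd p.1 1 with hM₀
  have hle : M₀ ≤ M := by
    rw [hM₀, bd_le_iff hm hz (by omega)]
    have := h M le_rfl; omega
  have hbase := sum_bd ⟨⟨hz, hm⟩, hOdd, hLab⟩ M₀ 1 (by omega) rfl
  have htail : ∀ j, M₀ ≤ j → p.1 j = 0 := by
    intro j hj
    have := (bd_le_iff hm hz (show (0:ℕ) < 1 by omega)).1 hj
    omega
  have hsplit : ∀ f : ℕ → ℕ, (∀ j, M₀ ≤ j → f j = 0) → ∑ j ∈ Finset.range M, f j
      = ∑ j ∈ Finset.range M₀, f j := by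
    intro f hf
    rw [Finset.range_eq_Ico, ← Finset.sum_Ico_consecutive _ (Nat.zero_le M₀) hle,
      ← Finset.range_eq_Ico]
    have : ∑ j ∈ Finset.Ico M₀ M, f j = 0 := by
      apply Finset.sum_eq_zero
      intro j hj
      rw [Finset.mem_Ico] at hj
      exact hf j hj.1
    omega
  rw [hsplit _ htail, hsplit _ (fun j hj => T3_zero (htail j hj)), hbase]

end Sum
end Z2BP

namespace Z2BP
section Shift
variable {q q' p : (ℕ → ℕ) × (ℕ → Bool)} {k : ℕ}

lemma shift_T3 (hm : ∀ i, q.1 (i+1) ≤ q.1 i) (hz : EventuallyZero q.1)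
    (h0 : 0 < q.1 0) (hk : bd q.1 (q.1 0) = k)
    (hsh : ∀ i, q'.1 i = q.1 (k + i))
    (hlab : ∀ c, 0 < c → c ≤ q.1 k → q'.2 c = q.2 c) :
    ∀ i, T3 q (k + i) = T3 q' i := by
  have hm' : ∀ i, q'.1 (i+1) ≤ q'.1 i := by
    intro i
    rw [hsh, hsh, show k + (i+1) = (k+i)+1 by omega]
    exact hm (k+i)
  have hz' : EventuallyZero q'.1 := by
    obtain ⟨N, hN⟩ := hz
    exact ⟨N, fun m hm2 => by rw [hsh]; exact hN _ (by omega)⟩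
  have hukv : q.1 k < q.1 0 := (bd_le_iff hm hz h0).1 (le_of_eq hk)
  have hconst : ∀ j, j < k → q.1 j = q.1 0 := by
    intro j hj
    have h1 : q.1 0 ≤ q.1 j := by
      rw [← lt_bd_iff hm hz h0, hk]; exact hj
    have h2 := mono_of hm (Nat.zero_le j)
    omega
  have hbd : ∀ c', 0 < c' → c' ≤ q.1 k + 1 →
      k ≤ bd q.1 c' ∧ bd q'.1 c' = bd q.1 c' - k := by
    intro c' hc1 hc2
    have hkle : k ≤ bd q.1 c' := by
      rcases Nat.eq_zero_or_pos k with h | h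
      · omega
      · have : k - 1 < bd q.1 c' := by
          rw [lt_bd_iff hm hz hc1, hconst (k-1) (by omega)]
          omega
        omega
    refine ⟨hkle, ?_⟩
    have hiff : ∀ j, bd q'.1 c' ≤ j ↔ bd q.1 c' - k ≤ j := by
      intro j
      rw [bd_le_iff hm' hz' hc1, hsh, ← bd_le_iff hm hz hc1]
      omega
    exact le_antisymm ((hiff _).2 le_rfl) ((hiff _).1 le_rfl)
  intro i
  rcases Nat.eq_zero_or_pos (q.1 (k+i)) with hc | hc
  · rw [T3_zero hc, T3_zero (by rw [hsh]; exact hc)]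
  have hc' : 0 < q'.1 i := by rw [hsh]; exact hc
  have hle : q.1 (k+i) ≤ q.1 k := mono_of hm (by omega)
  rw [T3_eq' hm hz hc, T3_eq' hm' hz' hc']
  have e1 : q'.1 i = q.1 (k+i) := hsh i
  obtain ⟨hA1, hA2⟩ := hbd (q.1 (k+i)) hc (by omega)
  obtain ⟨hB1, hB2⟩ := hbd (q.1 (k+i) + 1) (by omega) (by omega)
  rw [e1, hA2, hB2, hlab _ hc hle]
  have hAB : bd q.1 (q.1 (k+i) + 1) ≤ bd q.1 (q.1 (k+i)) := by
    have h1 : q.1 (bd q.1 (q.1 (k+i))) < q.1 (k+i) :=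
      (bd_le_iff hm hz hc).1 le_rfl
    rw [bd_le_iff hm hz (by omega)]
    omega
  have hoff : k + i - bd q.1 (q.1 (k+i) + 1) = i - (bd q.1 (q.1 (k+i) + 1) - k) := by
    have := (str_mem hm hz hc).1
    omega
  rw [hoff]
  congr 1
  omega

/-- value at start of string is at most half the part -/
lemma T3_start_le (hm : ∀ i, p.1 (i+1) ≤ p.1 i) (hz : EventuallyZero p.1) {j : ℕ}
    (hj : 0 < p.1 j) (hstart : bd p.1 (p.1 j + 1) = j) : T3 p j ≤ p.1 j / 2 := by
  rw [T3_eq' hm hz hj, hstart]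
  exact blockVal_start (by omega)

/-- successor with strictly smaller part starts a new string -/
lemma T3_succ_lt (hm : ∀ i, p.1 (i+1) ≤ p.1 i) (hz : EventuallyZero p.1) {j : ℕ}
    (hlt : p.1 (j+1) < p.1 j) : T3 p (j+1) ≤ p.1 (j+1) / 2 := by
  rcases Nat.eq_zero_or_pos (p.1 (j+1)) with h | h
  · rw [T3_zero h]; omega
  · exact T3_start_le hm hz h
      (bd_succ_eq hm hz rfl h (Or.inr (by simpa using hlt)))

end Shift

/-- detected value of the first block -/
noncomputable def firstVal (l : ℕ → ℕ) : ℕ :=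
  if l 1 = l 0 + 2 then 2 * l 0 + 2
  else if l 1 = l 0 + 1 then 2 * l 0 + 1
  else 2 * l 0

def pat (x d : ℕ) : ℕ → ℕ := fun j => if j % 2 = 0 then x else x + d

/-- detected length of the first block -/
noncomputable def firstLen (l : ℕ → ℕ) : ℕ :=
  if l 1 = l 0 + 2 then (sInf {j | l j ≠ pat (l 0) 2 j}) - (sInf {j | l j ≠ pat (l 0) 2 j}) % 2
  else if l 1 = l 0 + 1 then (sInf {j | l j ≠ pat (l 0) 1 j}) - (sInf {j | l j ≠ pat (l 0) 1 j}) % 2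
  else sInf {j | l j ≠ l 0}

noncomputable def Uaux : ℕ → (ℕ → ℕ) → (ℕ → ℕ) × (ℕ → Bool)
  | 0, _ => (fun _ => 0, fun _ => false)
  | (F+1), l =>
    if l 0 = 0 ∧ l 1 = 0 then (fun _ => 0, fun _ => false)
    else
      let v := firstVal l
      let k := firstLen l
      let rest := Uaux F (fun i => l (k + i))
      (fun i => if i < k then v else rest.1 (i - k),
       fun c => if c = v then decide (v % 2 = 0 ∧ k % 2 = 0 ∧ l 1 ≠ l 0 + 2) else rest.2 c)

noncomputable def U (l : ℕ → ℕ) : (ℕ → ℕ) × (ℕ → Bool) := Uaux (firstVal l + 1) l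

lemma sInf_eq_of {S : Set ℕ} {k : ℕ} (hbelow : ∀ j, j < k → j ∉ S) (hk : k ∈ S) :
    sInf S = k :=
  le_antisymm (Nat.sInf_le hk)
    (le_of_not_gt fun hlt => hbelow _ hlt (Nat.sInf_mem ⟨k, hk⟩))

lemma sInf_two {S : Set ℕ} {k : ℕ} (hbelow : ∀ j, j < k → j ∉ S)
    (hk : k ∈ S ∨ k + 1 ∈ S) : sInf S = k ∨ sInf S = k + 1 := by
  by_cases h : k ∈ S
  · exact Or.inl (sInf_eq_of hbelow h)
  · rcases hk with h1 | h1
    · exact absurd h1 h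
    · refine Or.inr (sInf_eq_of ?_ h1)
      intro j hj
      rcases Nat.lt_or_ge j k with h2 | h2
      · exact hbelow _ h2
      · have : j = k := by omega
        rw [this]; exact h

end Z2BP

namespace Z2BP
section Detect
variable {p : (ℕ → ℕ) × (ℕ → Bool)}

lemma detect (hP : GoodP p) (h0 : 0 < p.1 0) :
    firstVal (T3 p) = p.1 0 ∧ firstLen (T3 p) = bd p.1 (p.1 0) ∧
      (p.2 (p.1 0) = true ↔
        (p.1 0 % 2 = 0 ∧ (bd p.1 (p.1 0)) % 2 = 0 ∧ T3 p 1 ≠ T3 p 0 + 2)) := by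
  obtain ⟨⟨hz, hm⟩, hOdd, hLab⟩ := hP
  set v := p.1 0 with hv
  set k := bd p.1 v with hkdef
  have hbd0 : bd p.1 (v+1) = 0 :=
    le_antisymm ((bd_le_iff hm hz (by omega)).2 (by omega)) (Nat.zero_le _)
  have hk1 : 1 ≤ k := (lt_bd_iff hm hz h0).2 (le_refl v)
  have hconst : ∀ j, j < k → p.1 j = v := by
    intro j hj
    have h1 : v ≤ p.1 j := (lt_bd_iff hm hz h0).1 hj
    have h2 : p.1 j ≤ v := mono_of hm (Nat.zero_le j)
    omega
  have hTj : ∀ j, j < k → T3 p j = blockVal v k (p.2 v) j := by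
    intro j hj
    have h := T3_eq' hm hz (show 0 < p.1 j by rw [hconst j hj]; omega)
    rw [hconst j hj, hbd0, Nat.sub_zero, Nat.sub_zero] at h
    exact h
  have hu : p.1 k < v := (bd_le_iff hm hz h0).1 (le_refl k)
  have hnc : {j | p.1 j = v}.ncard = k := by
    rw [fiber_ncard hm hz h0, hbd0, Nat.sub_zero]
  -- start of the next string
  have hstartk : 0 < p.1 k → bd p.1 (p.1 k + 1) = k := by
    intro hu0
    refine bd_succ_eq hm hz rfl hu0 (Or.inr ?_)
    rw [hconst (k-1) (by omega)]
    omega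
  have hTkblock : 0 < p.1 k →
      T3 p k = blockVal (p.1 k) (bd p.1 (p.1 k) - k) (p.2 (p.1 k)) 0 := by
    intro hu0
    rw [T3_eq' hm hz hu0, hstartk hu0, Nat.sub_self]
  have hTk1block : p.1 (k+1) = p.1 k → 0 < p.1 k →
      T3 p (k+1) = blockVal (p.1 k) (bd p.1 (p.1 k) - k) (p.2 (p.1 k)) 1 := by
    intro heq hu0
    rw [T3_eq' hm hz (by omega), heq, hstartk hu0, show k + 1 - k = 1 by omega]
  have hsucclt : p.1 (k+1) < p.1 k → T3 p (k+1) ≤ p.1 (k+1) / 2 :=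
    fun h => T3_succ_lt hm hz h
  rcases Nat.eq_zero_or_pos (v % 2) with hpar | hpar
  · -- v even
    have hv2 : 1 ≤ v / 2 := by omega
    by_cases hC : Odd k ∨ p.2 v = true
    · -- C-type first string
      have hval : ∀ j, j < k → T3 p j = v / 2 := by
        intro j hj
        rw [hTj j hj, blockVal, if_neg (by omega), if_pos hC]
      have l0 : T3 p 0 = v / 2 := hval 0 (by omega)
      have hTk : T3 p k < v / 2 := by
        rcases Nat.eq_zero_or_pos (p.1 k) with hu0 | hu0
        · rw [T3_zero hu0]; omega
        · have h1 : p.1 (k - 1 + 1) < p.1 (k - 1) := by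
            rw [show k - 1 + 1 = k by omega, hconst (k-1) (by omega)]; exact hu
          have h2 := T3_succ_lt hm hz h1
          rw [show k - 1 + 1 = k by omega] at h2
          omega
      have l1le : T3 p 1 ≤ v / 2 := by
        rcases Nat.lt_or_ge 1 k with h | h
        · rw [hval 1 h]
        · have h1 : k = 1 := by omega
          rw [h1] at hTk; omega
      have hfv : firstVal (T3 p) = v := by
        rw [firstVal, if_neg (by omega), if_neg (by omega)]
        omega
      have hfl : firstLen (T3 p) = k := by
        rw [firstLen, if_neg (by omega), if_neg (by omega)]
        apply sInf_eq_of
        · intro j hj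
          simp only [Set.mem_setOf_eq, not_not]
          rw [hval j hj, l0]
        · simp only [Set.mem_setOf_eq]
          rw [l0]
          omega
      refine ⟨hfv, hfl, ?_⟩
      rcases Nat.even_or_odd k with hke | hko
      · have hlabv : p.2 v = true := by
          rcases hC with h | h
          · exact absurd h (by simp [Nat.not_odd_iff_even.2 hke])
          · exact h
        simp only [hlabv, true_iff]
        refine ⟨by omega, by rw [Nat.even_iff] at hke; omega, by omega⟩
      · have hlabv : p.2 v = false := by
          apply hLab
          rintro ⟨-, -, -, h4⟩
          rw [hnc, Nat.even_iff] at h4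
          rw [Nat.odd_iff] at hko
          omega
        rw [hlabv]
        constructor
        · intro h; exact absurd h (by simp)
        · rintro ⟨-, h2, -⟩
          rw [Nat.odd_iff] at hko
          omega
    · -- D-type first string
      have hkE : k % 2 = 0 := by
        rcases Nat.even_or_odd k with h | h
        · exact Nat.even_iff.1 h
        · exact absurd (Or.inl h) hC
      have hk2 : 2 ≤ k := by omega
      have hlabv : p.2 v = false := by
        rcases Bool.eq_false_or_eq_true (p.2 v) with h | h
        · exact absurd (Or.inr h) hC
        · exact h
      have hval : ∀ j, j < k → T3 p j = pat (v/2 - 1) 2 j := by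
        intro j hj
        rw [hTj j hj, blockVal, if_neg (by omega), if_neg hC, pat]
        split_ifs <;> omega
      have l0 : T3 p 0 = v / 2 - 1 := by
        rw [hval 0 (by omega), pat]; norm_num
      have l1 : T3 p 1 = v / 2 + 1 := by
        rw [hval 1 (by omega), pat]; norm_num
        omega
      have hclaim : T3 p k = v/2 - 1 → T3 p (k+1) ≠ v/2 + 1 := by
        intro hx
        rcases Nat.eq_zero_or_pos (p.1 k) with hu0 | hu0
        · have h2 : p.1 (k+1) = 0 := by have := hm k; omega
          rw [T3_zero h2]; omega
        · rw [hTkblock hu0] at hx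
          norm_num [blockVal] at hx
          split_ifs at hx with g1 g2
          · -- next string odd value
            have huval : p.1 k = v - 1 := by omega
            rcases Nat.lt_or_ge (p.1 (k+1)) (p.1 k) with hlt | hge
            · have := hsucclt hlt; omega
            · have heq : p.1 (k+1) = p.1 k := by have := hm k; omega
              rw [hTk1block heq hu0]
              norm_num [blockVal]
              rw [if_pos g1]
              omega
          · -- next string even C-type
            have huval : p.1 k = v - 2 := by omega
            rcases Nat.lt_or_ge (p.1 (k+1)) (p.1 k) with hlt | hge
            · have := hsucclt hlt; omega
            · have heq : p.1 (k+1) = p.1 k := by have := hm k; omega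
              rw [hTk1block heq hu0]
              norm_num [blockVal]
              rw [if_neg g1, if_pos g2]
              omega
          · -- next string even D-type: impossible
            omega
      have hfv : firstVal (T3 p) = v := by
        rw [firstVal, if_pos (by omega)]
        omega
      have hfl : firstLen (T3 p) = k := by
        rw [firstLen, if_pos (by omega), l0]
        have hbelow : ∀ j, j < k → j ∉ {j | T3 p j ≠ pat (v/2-1) 2 j} := by
          intro j hj
          simp only [Set.mem_setOf_eq, not_not]
          exact hval j hj
        have hmem : k ∈ {j | T3 p j ≠ pat (v/2-1) 2 j} ∨
            (k+1) ∈ {j | T3 p j ≠ pat (v/2-1) 2 j} := by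
          by_cases hx : T3 p k = pat (v/2-1) 2 k
          · right
            simp only [Set.mem_setOf_eq]
            rw [pat] at hx ⊢
            rw [if_pos (by omega)] at hx
            rw [if_neg (by omega)]
            have := hclaim hx
            omega
          · exact Or.inl hx
        rcases sInf_two hbelow hmem with h | h <;> rw [h] <;> omega
      refine ⟨hfv, hfl, ?_⟩
      rw [hlabv]
      constructor
      · intro h; exact absurd h (by simp)
      · rintro ⟨-, -, h3⟩
        exact absurd (by omega) h3
  · -- v odd : E-type first string
    have hkE : k % 2 = 0 := by
      have h := hOdd v (Nat.odd_iff.2 (by omega))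
      rw [hnc, Nat.even_iff] at h
      exact h
    have hk2 : 2 ≤ k := by omega
    have hval : ∀ j, j < k → T3 p j = pat (v/2) 1 j := by
      intro j hj
      rw [hTj j hj, blockVal, if_pos (by omega), pat]
    have l0 : T3 p 0 = v / 2 := by
      rw [hval 0 (by omega), pat]; norm_num
    have l1 : T3 p 1 = v / 2 + 1 := by
      rw [hval 1 (by omega), pat]; norm_num
    have hclaim : T3 p k = v/2 → T3 p (k+1) ≠ v/2 + 1 := by
      intro hx
      rcases Nat.eq_zero_or_pos (p.1 k) with hu0 | hu0
      · have hveq : v = 1 := by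
          rw [T3_zero hu0] at hx
          omega
        have h2 : p.1 (k+1) = 0 := by have := hm k; omega
        rw [T3_zero h2]
        omega
      · rw [hTkblock hu0] at hx
        norm_num [blockVal] at hx
        split_ifs at hx with g1 g2
        · -- u odd : impossible
          omega
        · -- u even C-type
          have huval : p.1 k = v - 1 := by omega
          rcases Nat.lt_or_ge (p.1 (k+1)) (p.1 k) with hlt | hge
          · have := hsucclt hlt; omega
          · have heq : p.1 (k+1) = p.1 k := by have := hm k; omega
            rw [hTk1block heq hu0]
            norm_num [blockVal]
            rw [if_neg g1, if_pos g2]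
            omega
        · -- u even D-type: impossible
          omega
    have hfv : firstVal (T3 p) = v := by
      rw [firstVal, if_neg (by omega), if_pos (by omega)]
      omega
    have hfl : firstLen (T3 p) = k := by
      rw [firstLen, if_neg (by omega), if_pos (by omega), l0]
      have hbelow : ∀ j, j < k → j ∉ {j | T3 p j ≠ pat (v/2) 1 j} := by
        intro j hj
        simp only [Set.mem_setOf_eq, not_not]
        exact hval j hj
      have hmem : k ∈ {j | T3 p j ≠ pat (v/2) 1 j} ∨
          (k+1) ∈ {j | T3 p j ≠ pat (v/2) 1 j} := by
        by_cases hx : T3 p k = pat (v/2) 1 k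
        · right
          simp only [Set.mem_setOf_eq]
          rw [pat] at hx ⊢
          rw [if_pos (by omega)] at hx
          rw [if_neg (by omega)]
          have := hclaim hx
          omega
        · exact Or.inl hx
      rcases sInf_two hbelow hmem with h | h <;> rw [h] <;> omega
    refine ⟨hfv, hfl, ?_⟩
    have hlabv : p.2 v = false := by
      apply hLab
      rintro ⟨-, h2, -, -⟩
      rw [Nat.even_iff] at h2
      omega
    rw [hlabv]
    constructor
    · intro h; exact absurd h (by simp)
    · rintro ⟨h1, -, -⟩
      omega

end Detect
end Z2BP

namespace Z2BP
section LeftInv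

lemma bd_shift {ν : ℕ → ℕ} {k c : ℕ} (hm : ∀ i, ν (i+1) ≤ ν i) (hz : EventuallyZero ν)
    (h0 : 0 < ν 0) (hk : bd ν (ν 0) = k) (hc1 : 0 < c) (hc2 : c ≤ ν k + 1) :
    k ≤ bd ν c ∧ bd (fun i => ν (k + i)) c = bd ν c - k := by
  have hm' : ∀ i, ν (k + (i+1)) ≤ ν (k + i) := by
    intro i
    rw [show k + (i+1) = (k+i)+1 by omega]
    exact hm (k+i)
  have hz' : EventuallyZero (fun i => ν (k + i)) := by
    obtain ⟨N, hN⟩ := hz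
    exact ⟨N, fun m hm2 => hN _ (by omega)⟩
  have hukv : ν k < ν 0 := (bd_le_iff hm hz h0).1 (le_of_eq hk)
  have hconst : ∀ j, j < k → ν j = ν 0 := by
    intro j hj
    have h1 : ν 0 ≤ ν j := by
      rw [← lt_bd_iff hm hz h0, hk]; exact hj
    have h2 := mono_of hm (Nat.zero_le j)
    omega
  have hkle : k ≤ bd ν c := by
    rcases Nat.eq_zero_or_pos k with h | h
    · omega
    · have : k - 1 < bd ν c := by
        rw [lt_bd_iff hm hz hc1, hconst (k-1) (by omega)]
        omega
      omega
  refine ⟨hkle, ?_⟩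
  have hiff : ∀ j, bd (fun i => ν (k + i)) c ≤ j ↔ bd ν c - k ≤ j := by
    intro j
    rw [bd_le_iff hm' hz' hc1]
    show ν (k + j) < c ↔ _
    rw [← bd_le_iff hm hz hc1]
    omega
  exact le_antisymm ((hiff _).2 le_rfl) ((hiff _).1 le_rfl)

variable {p : (ℕ → ℕ) × (ℕ → Bool)}

lemma zeroP (hP : GoodP p) (h0 : p.1 0 = 0) : p = (fun _ => 0, fun _ => false) := by
  obtain ⟨⟨hz, hm⟩, hOdd, hLab⟩ := hP
  have hzero : ∀ i, p.1 i = 0 := by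
    intro i
    have := mono_of hm (Nat.zero_le i)
    omega
  have hlab0 : ∀ c, p.2 c = false := by
    intro c
    apply hLab
    rintro ⟨hc1, -, hc3, -⟩
    have he : {i | p.1 i = c} = ∅ := by
      ext i
      simp only [Set.mem_setOf_eq, Set.mem_empty_iff_false, iff_false]
      rw [hzero i]
      omega
    rw [he, Set.ncard_empty] at hc3
    omega
  exact Prod.ext (funext hzero) (funext hlab0)

lemma U_T3 : ∀ F (p : (ℕ → ℕ) × (ℕ → Bool)), GoodP p → firstVal (T3 p) ≤ F →
    Uaux F (T3 p) = p := by
  intro F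
  induction F with
  | zero =>
    intro p hP hf
    rcases Nat.eq_zero_or_pos (p.1 0) with h0 | h0
    · rw [zeroP hP h0]
      rfl
    · have := (detect hP h0).1
      omega
  | succ F ih =>
    intro p hP hf
    obtain ⟨⟨hz, hm⟩, hOdd, hLab⟩ := hP
    rcases Nat.eq_zero_or_pos (p.1 0) with h0 | h0
    · have hzero : ∀ i, p.1 i = 0 := by
        intro i
        have := mono_of hm (Nat.zero_le i)
        omega
      have h01 : T3 p 0 = 0 := T3_zero h0
      have h02 : T3 p 1 = 0 := T3_zero (hzero 1)
      simp only [Uaux]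
      rw [if_pos ⟨h01, h02⟩]
      exact (zeroP ⟨⟨hz, hm⟩, hOdd, hLab⟩ h0).symm
    · obtain ⟨hfv, hfl, hbit⟩ := detect ⟨⟨hz, hm⟩, hOdd, hLab⟩ h0
      set v := p.1 0 with hv
      set k := bd p.1 v with hkdef
      have hu : p.1 k < v := (bd_le_iff hm hz h0).1 (le_refl k)
      have hconst : ∀ j, j < k → p.1 j = v := by
        intro j hj
        have h1 : v ≤ p.1 j := (lt_bd_iff hm hz h0).1 hj
        have h2 : p.1 j ≤ v := mono_of hm (Nat.zero_le j)
        omega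
      set ν' : ℕ → ℕ := fun i => p.1 (k + i) with hν'
      set lab' : ℕ → Bool := fun c => if c = v then false else p.2 c with hlab'
      have hm' : ∀ i, ν' (i+1) ≤ ν' i := by
        intro i
        rw [hν']
        simp only
        rw [show k + (i+1) = (k+i)+1 by omega]
        exact hm (k+i)
      have hz' : EventuallyZero ν' := by
        obtain ⟨N, hN⟩ := hz
        exact ⟨N, fun m hm2 => hN _ (by omega)⟩
      -- fibers of the shifted sequence
      have hfib : ∀ c, 0 < c → c ≤ p.1 k →
          {i | ν' i = c}.ncard = {i | p.1 i = c}.ncard := by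
        intro c hc1 hc2
        have h1 := bd_shift hm hz h0 hkdef.symm hc1 (by omega)
        have h2 := bd_shift hm hz h0 hkdef.symm (show 0 < c + 1 by omega) (by omega)
        rw [fiber_ncard hm' hz' hc1, fiber_ncard hm hz hc1]
        rw [hν']
        rw [h1.2, h2.2]
        omega
      have hfibe : ∀ c, p.1 k < c → {i | ν' i = c} = ∅ := by
        intro c hc
        ext i
        simp only [Set.mem_setOf_eq, Set.mem_empty_iff_false, iff_false]
        have : ν' i ≤ p.1 k := by
          rw [hν']
          exact mono_of hm (by omega)
        omega
      have hfibe' : ∀ c, p.1 k < c → c ≠ v → {i | p.1 i = c} = ∅ := by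
        intro c hc hcv
        ext i
        simp only [Set.mem_setOf_eq, Set.mem_empty_iff_false, iff_false]
        rcases Nat.lt_or_ge i k with hik | hik
        · rw [hconst i hik]; omega
        · have : p.1 i ≤ p.1 k := mono_of hm hik
          omega
      have hP' : GoodP (ν', lab') := by
        refine ⟨⟨hz', hm'⟩, ?_, ?_⟩
        · intro c hc
          rcases Nat.lt_or_ge (p.1 k) c with h | h
          · rw [hfibe c h, Set.ncard_empty]
            exact Even.zero
          · have hc1 : 0 < c := hc.pos
            rw [hfib c hc1 h]
            exact hOdd c hc
        · intro c hcon
          simp only [hlab']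
          by_cases hcv : c = v
          · rw [if_pos hcv]
          · rw [if_neg hcv]
            rcases Nat.eq_zero_or_pos c with hc0 | hc0
            · apply hLab
              rintro ⟨h1, -⟩
              omega
            · rcases Nat.lt_or_ge (p.1 k) c with h | h
              · apply hLab
                rintro ⟨-, -, h3, -⟩
                rw [hfibe' c h hcv, Set.ncard_empty] at h3
                omega
              · apply hLab
                rw [← hfib c hc0 h]
                exact hcon
      have hT3p' : ∀ i, T3 p (k + i) = T3 (ν', lab') i := by
        apply shift_T3 hm hz h0 hkdef.symm (fun i => rfl)
        intro c hc1 hc2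
        simp only [hlab']
        rw [if_neg (by omega)]
      have hfv' : firstVal (T3 (ν', lab')) ≤ F := by
        rcases Nat.eq_zero_or_pos (ν' 0) with h0' | h0'
        · have hz1 : T3 (ν', lab') 0 = 0 := T3_zero h0'
          have hz2 : T3 (ν', lab') 1 = 0 := T3_zero (show ν' 1 = 0 by
            have h2 : ν' 1 ≤ ν' 0 := mono_of hm' (by omega)
            omega)
          rw [firstVal, hz1, hz2, if_neg (by omega), if_neg (by omega)]
          omega
        · have hd : firstVal (T3 (ν', lab')) = p.1 k := (detect hP' h0').1
          omega
      have hrest := ih (ν', lab') hP' hfv'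
      have hfun : (fun i => T3 p (k + i)) = T3 (ν', lab') := funext hT3p'
      simp only [Uaux]
      have hnz : ¬(T3 p 0 = 0 ∧ T3 p 1 = 0) := by
        rintro ⟨ha, hb⟩
        rw [firstVal, ha, hb] at hfv
        norm_num at hfv
        omega
      rw [if_neg hnz, hfl, hfv, hfun, hrest]
      refine Prod.ext (funext ?_) (funext ?_)
      · intro i
        show (if i < k then v else ν' (i - k)) = p.1 i
        rcases Nat.lt_or_ge i k with hik | hik
        · rw [if_pos hik, hconst i hik]
        · rw [if_neg (by omega)]
          show p.1 (k + (i - k)) = p.1 i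
          have e : k + (i - k) = i := by omega
          rw [e]
      · intro c
        show (if c = v then decide (v % 2 = 0 ∧ k % 2 = 0 ∧ T3 p 1 ≠ T3 p 0 + 2)
            else lab' c) = p.2 c
        by_cases hcv : c = v
        · rw [if_pos hcv, hcv]
          by_cases hp : (v % 2 = 0 ∧ k % 2 = 0 ∧ T3 p 1 ≠ T3 p 0 + 2)
          · rw [decide_eq_true hp]
            exact (hbit.2 hp).symm
          · rw [decide_eq_false hp]
            rcases Bool.eq_false_or_eq_true (p.2 v) with h | h
            · exact absurd (hbit.1 h) hp
            · exact h.symm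
        · rw [if_neg hcv]
          show (if c = v then false else p.2 c) = p.2 c
          rw [if_neg hcv]

end LeftInv
end Z2BP

namespace Z2BP

def GoodL (l : ℕ → ℕ) : Prop :=
  EventuallyZero l ∧ (∀ i, l (i+2) ≤ l i) ∧ (∀ i, l (i+1) ≤ l i + 2)

lemma zeroL {l : ℕ → ℕ} (hbip : ∀ i, l (i+2) ≤ l i) (h0 : l 0 = 0) (h1 : l 1 = 0) :
    ∀ i, l i = 0 := by
  have key : ∀ n, l n = 0 ∧ l (n+1) = 0 := by
    intro n
    induction n with
    | zero => exact ⟨h0, h1⟩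
    | succ n ih =>
      refine ⟨ih.2, ?_⟩
      have h2 : l (n+2) = 0 := by
        have := hbip n
        have := ih.1
        omega
      exact h2
  exact fun i => (key i).1

lemma goodP_zero : GoodP ((fun _ => 0, fun _ => false) : (ℕ→ℕ)×(ℕ→Bool)) := by
  refine ⟨⟨⟨0, fun m _ => rfl⟩, fun i => le_rfl⟩, ?_, ?_⟩
  · intro c hc
    have h1 : {i : ℕ | ((fun _ => 0, fun _ => false) : (ℕ→ℕ)×(ℕ→Bool)).1 i = c} = ∅ := by
      ext i
      simp only [Set.mem_setOf_eq, Set.mem_empty_iff_false, iff_false]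
      show ¬((0:ℕ) = c)
      rcases hc with ⟨t, ht⟩
      omega
    rw [h1, Set.ncard_empty]
    exact Even.zero
  · intro c _
    rfl

lemma assemble {l : ℕ → ℕ} {F : ℕ}
    (ih : ∀ l', GoodL l' → firstVal l' ≤ F → GoodP (Uaux F l') ∧ T3 (Uaux F l') = l')
    (hL : GoodL l) (hf : firstVal l ≤ F + 1)
    (hz0 : ¬(l 0 = 0 ∧ l 1 = 0))
    (hv : 0 < firstVal l) (hk : 0 < firstLen l)
    (hvk : firstVal (fun i => l (firstLen l + i)) < firstVal l)
    (hparity : firstVal l % 2 = 1 → firstLen l % 2 = 0)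
    (hpre : ∀ j, j < firstLen l → l j =
      blockVal (firstVal l) (firstLen l)
        (decide (firstVal l % 2 = 0 ∧ firstLen l % 2 = 0 ∧ l 1 ≠ l 0 + 2)) j) :
    GoodP (Uaux (F+1) l) ∧ T3 (Uaux (F+1) l) = l := by
  obtain ⟨hzl, hbip, hexc⟩ := hL
  set v := firstVal l with hvdef
  set k := firstLen l with hkdef
  set bit := decide (v % 2 = 0 ∧ k % 2 = 0 ∧ l 1 ≠ l 0 + 2) with hbitdef
  set l' : ℕ → ℕ := fun i => l (k + i) with hl'def
  have hL' : GoodL l' := by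
    refine ⟨?_, ?_, ?_⟩
    · obtain ⟨N, hN⟩ := hzl
      exact ⟨N, fun m hm => hN (k + m) (by omega)⟩
    · intro i
      exact hbip (k + i)
    · intro i
      exact hexc (k + i)
  obtain ⟨hG', hT'⟩ := ih l' hL' (by omega)
  set P := Uaux F l' with hPdef
  have hp'0 : P.1 0 < v := by
    rcases Nat.eq_zero_or_pos (P.1 0) with h | h
    · omega
    · have hd := (detect hG' h).1
      rw [hT'] at hd
      omega
  set ν'' : ℕ → ℕ := fun i => if i < k then v else P.1 (i - k) with hν''def
  set lab'' : ℕ → Bool := fun c => if c = v then bit else P.2 c with hlab''def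
  have heq : Uaux (F+1) l = (ν'', lab'') := by
    simp only [Uaux]
    rw [if_neg hz0]
  have hν0 : ∀ j, j < k → ν'' j = v := by
    intro j hj
    show (if j < k then v else P.1 (j - k)) = v
    rw [if_pos hj]
  have hνk : ∀ i, ν'' (k + i) = P.1 i := by
    intro i
    show (if k + i < k then v else P.1 (k + i - k)) = P.1 i
    rw [if_neg (by omega), show k + i - k = i by omega]
  have hm'' : ∀ i, ν'' (i+1) ≤ ν'' i := by
    intro i
    rcases Nat.lt_or_ge (i+1) k with h1 | h1
    · rw [hν0 (i+1) h1, hν0 i (by omega)]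
    · rcases Nat.lt_or_ge i k with h2 | h2
      · have e : i + 1 = k + 0 := by omega
        rw [e, hνk 0, hν0 i h2]
        omega
      · calc ν'' (i+1) = P.1 (i - k + 1) := by
              have h3 := hνk (i - k + 1)
              rw [show k + (i - k + 1) = i + 1 by omega] at h3
              exact h3
          _ ≤ P.1 (i - k) := hG'.1.2 (i - k)
          _ = ν'' i := by
              have h3 := hνk (i - k)
              rw [show k + (i - k) = i by omega] at h3
              exact h3.symm
  have hz'' : EventuallyZero ν'' := by
    obtain ⟨N, hN⟩ := hG'.1.1
    refine ⟨k + N, fun m hm => ?_⟩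
    rw [show m = k + (m - k) by omega, hνk]
    exact hN (m - k) (by omega)
  have hb0 : bd ν'' (v+1) = 0 :=
    le_antisymm ((bd_le_iff hm'' hz'' (by omega)).2 (by rw [hν0 0 hk]; omega)) (Nat.zero_le _)
  have hbv : bd ν'' v = k := by
    refine le_antisymm ((bd_le_iff hm'' hz'' hv).2 ?_) ?_
    · rw [show (k:ℕ) = k + 0 by omega, hνk]
      omega
    · have h1 : k - 1 < bd ν'' v := (lt_bd_iff hm'' hz'' hv).2 (by rw [hν0 (k-1) (by omega)])
      omega
  have hset : ∀ c, c ≠ v → {i | ν'' i = c} = (fun j => k + j) '' {i | P.1 i = c} := by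
    intro c hc
    ext i
    simp only [Set.mem_setOf_eq, Set.mem_image]
    constructor
    · intro h
      rcases Nat.lt_or_ge i k with h2 | h2
      · rw [hν0 i h2] at h
        exact absurd h.symm hc
      · refine ⟨i - k, ?_, by omega⟩
        rw [← hνk (i - k), show k + (i - k) = i by omega]
        exact h
    · rintro ⟨j, hj1, hj2⟩
      rw [← hj2, hνk]
      exact hj1
  have hncard : ∀ c, c ≠ v → {i | ν'' i = c}.ncard = {i | P.1 i = c}.ncard := by
    intro c hc
    rw [hset c hc]
    exact Set.ncard_image_of_injective _ (fun a b hab => by omega)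
  have hncv : {i | ν'' i = v}.ncard = k := by
    rw [fiber_ncard hm'' hz'' hv, hbv, hb0]
    omega
  have hGood : GoodP (ν'', lab'') := by
    refine ⟨⟨hz'', hm''⟩, ?_, ?_⟩
    · intro c hc
      by_cases hcv : c = v
      · rw [hcv, hncv]
        rw [hcv] at hc
        rw [Nat.even_iff]
        exact hparity (Nat.odd_iff.1 hc)
      · rw [hncard c hcv]
        exact hG'.2.1 c hc
    · intro c hcon
      show (if c = v then bit else P.2 c) = false
      by_cases hcv : c = v
      · rw [if_pos hcv]
        by_cases hb : (v % 2 = 0 ∧ k % 2 = 0 ∧ l 1 ≠ l 0 + 2)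
        · exfalso
          apply hcon
          rw [hcv, hncv]
        
          exact ⟨hv, Nat.even_iff.2 hb.1, hk, Nat.even_iff.2 hb.2.1⟩
        · exact decide_eq_false hb
      · rw [if_neg hcv]
        refine hG'.2.2 c (fun hx => hcon ?_)
        refine ⟨hx.1, hx.2.1, ?_, ?_⟩
        · rw [hncard c hcv]
          exact hx.2.2.1
        · rw [hncard c hcv]
          exact hx.2.2.2
  have hlabv : lab'' v = bit := by
    show (if v = v then bit else P.2 v) = bit
    rw [if_pos rfl]
  have hT'' : T3 (ν'', lab'') = l := by
    funext i
    rcases Nat.lt_or_ge i k with hik | hik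
    · have hvi : ν'' i = v := hν0 i hik
      have ht := T3_eq' (p := (ν'', lab'')) hm'' hz'' (show 0 < ν'' i by omega)
      rw [show ((ν'', lab'') : (ℕ→ℕ)×(ℕ→Bool)).1 = ν'' from rfl] at ht
      rw [hvi, hb0, hbv, Nat.sub_zero, Nat.sub_zero] at ht
      rw [show ((ν'', lab'') : (ℕ→ℕ)×(ℕ→Bool)).2 = lab'' from rfl, hlabv] at ht
      rw [ht, hpre i hik]
    · have h0'' : 0 < ν'' 0 := by rw [hν0 0 hk]; omega
      have hbv' : bd ν'' (ν'' 0) = k := by rw [hν0 0 hk]; exact hbv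
      have hsh := shift_T3 (q := (ν'', lab'')) (q' := P) hm'' hz'' h0'' hbv'
        (fun i => (hνk i).symm)
        (fun c hc1 hc2 => by
          have hck : ν'' k = P.1 0 := hνk 0
          have hc2' : c ≤ ν'' k := hc2
          rw [hck] at hc2'
          show P.2 c = (if c = v then bit else P.2 c)
          rw [if_neg (by omega)])
      rw [show i = k + (i - k) by omega, hsh (i - k), hT']
  rw [heq]
  exact ⟨hGood, hT''⟩

end Z2BP

namespace Z2BP

lemma T3_U : ∀ F (l : ℕ → ℕ), GoodL l → firstVal l ≤ F →
    GoodP (Uaux F l) ∧ T3 (Uaux F l) = l := by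
  intro F
  induction F with
  | zero =>
    intro l hL hf
    obtain ⟨hzl, hbip, hexc⟩ := hL
    have h01 : l 0 = 0 ∧ l 1 = 0 := by
      have he : l 1 ≤ l 0 + 2 := hexc 0
      rw [firstVal] at hf
      split_ifs at hf <;> omega
    have hall := zeroL hbip h01.1 h01.2
    refine ⟨goodP_zero, funext fun i => ?_⟩
    exact (T3_zero rfl).trans (hall i).symm
  | succ F ih =>
    intro l hL hf
    by_cases hz0 : l 0 = 0 ∧ l 1 = 0
    · obtain ⟨hzl, hbip, hexc⟩ := hL
      have hall := zeroL hbip hz0.1 hz0.2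
      have hU : Uaux (F+1) l = (fun _ => 0, fun _ => false) := by
        simp only [Uaux]
        rw [if_pos hz0]
      rw [hU]
      exact ⟨goodP_zero, funext fun i => (T3_zero rfl).trans (hall i).symm⟩
    · obtain ⟨hzl, hbip, hexc⟩ := hL
      have hfvrest : ∀ k : ℕ, firstVal (fun i => l (k + i)) =
          (if l (k+1) = l k + 2 then 2 * l k + 2
            else if l (k+1) = l k + 1 then 2 * l k + 1 else 2 * l k) := fun k => rfl
      by_cases hD : l 1 = l 0 + 2
      · -- D-type first block
        have hSne : {j | l j ≠ pat (l 0) 2 j}.Nonempty := by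
          obtain ⟨N, hN⟩ := hzl
          refine ⟨2*N+1, ?_⟩
          simp only [Set.mem_setOf_eq, pat]
          rw [if_neg (by omega), hN (2*N+1) (by omega)]
          omega
        set j₀ := sInf {j | l j ≠ pat (l 0) 2 j} with hj₀def
        have hj₀S : l j₀ ≠ pat (l 0) 2 j₀ := Nat.sInf_mem hSne
        have hpre'' : ∀ j, j < j₀ → l j = pat (l 0) 2 j := by
          intro j hj
          by_contra h
          have h2 : j₀ ≤ j := Nat.sInf_le h
          omega
        have hj₀2 : 2 ≤ j₀ := by
          by_contra h
          rcases (show j₀ = 0 ∨ j₀ = 1 by omega) with h1 | h1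
          · rw [h1] at hj₀S
            exact hj₀S (by simp [pat])
          · rw [h1] at hj₀S
            refine hj₀S ?_
            simp only [pat]
            rw [if_neg (by omega)]
            exact hD
        set k := j₀ - j₀ % 2 with hkdef
        have hkE : k % 2 = 0 := by omega
        have hk2 : 2 ≤ k := by omega
        have hfleq : firstLen l = k := by rw [firstLen, if_pos hD]
        have hfveq : firstVal l = 2 * l 0 + 2 := by rw [firstVal, if_pos hD]
        have hpre' : ∀ j, j < k → l j = pat (l 0) 2 j := fun j hj => hpre'' j (by omega)
        have hvk' : firstVal (fun i => l (k+i)) < 2 * l 0 + 2 := by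
          rw [hfvrest k]
          rcases (show j₀ % 2 = 0 ∨ j₀ % 2 = 1 by omega) with hpar | hpar
          · have hkj : k = j₀ := by omega
            have hle : l k ≤ l 0 := by
              have h2 := hbip (k-2)
              rw [show k-2+2 = k by omega] at h2
              rw [hpre' (k-2) (by omega)] at h2
              simp only [pat] at h2
              rw [if_pos (by omega)] at h2
              exact h2
            have hne : l k ≠ l 0 := by
              rw [hkj]
              intro h
              refine hj₀S ?_
              simp only [pat]
              rw [if_pos (by omega)]
              exact h
            split_ifs with g1 g2 <;> omega
          · have hkj : k = j₀ - 1 := by omega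
            have hlkeq : l k = l 0 := by
              rw [hpre'' k (by omega)]
              simp only [pat]
              rw [if_pos (by omega)]
            have hne1 : l (k+1) ≠ l 0 + 2 := by
              have e : k + 1 = j₀ := by omega
              rw [e]
              intro h
              refine hj₀S ?_
              simp only [pat]
              rw [if_neg (by omega)]
              exact h
            split_ifs with g1 g2 <;> omega
        refine assemble ih ⟨hzl, hbip, hexc⟩ hf hz0 (by rw [hfveq]; omega)
          (by rw [hfleq]; omega) (by rw [hfleq, hfveq]; exact hvk')
          (fun h => by rw [hfveq] at h; omega) ?_
        intro j hj
        rw [hfleq] at hj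
        rw [hfleq, hfveq, hpre' j hj]
        have hbit : decide ((2 * l 0 + 2) % 2 = 0 ∧ k % 2 = 0 ∧ l 1 ≠ l 0 + 2) = false :=
          decide_eq_false (by
            rintro ⟨-, -, h3⟩
            exact h3 hD)
        unfold blockVal
        rw [if_neg (by omega), if_neg (by
          rintro (h | h)
          · rw [Nat.odd_iff] at h; omega
          · rw [hbit] at h; exact absurd h (by simp))]
        simp only [pat]
        split_ifs <;> omega
      · by_cases hE : l 1 = l 0 + 1
        · -- E-type first block
          have hSne : {j | l j ≠ pat (l 0) 1 j}.Nonempty := by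
            obtain ⟨N, hN⟩ := hzl
            refine ⟨2*N+1, ?_⟩
            simp only [Set.mem_setOf_eq, pat]
            rw [if_neg (by omega), hN (2*N+1) (by omega)]
            omega
          set j₀ := sInf {j | l j ≠ pat (l 0) 1 j} with hj₀def
          have hj₀S : l j₀ ≠ pat (l 0) 1 j₀ := Nat.sInf_mem hSne
          have hpre'' : ∀ j, j < j₀ → l j = pat (l 0) 1 j := by
            intro j hj
            by_contra h
            have h2 : j₀ ≤ j := Nat.sInf_le h
            omega
          have hj₀2 : 2 ≤ j₀ := by
            by_contra h
            rcases (show j₀ = 0 ∨ j₀ = 1 by omega) with h1 | h1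
            · rw [h1] at hj₀S
              exact hj₀S (by simp [pat])
            · rw [h1] at hj₀S
              refine hj₀S ?_
              simp only [pat]
              rw [if_neg (by omega)]
              exact hE
          set k := j₀ - j₀ % 2 with hkdef
          have hkE : k % 2 = 0 := by omega
          have hk2 : 2 ≤ k := by omega
          have hfleq : firstLen l = k := by rw [firstLen, if_neg hD, if_pos hE]
          have hfveq : firstVal l = 2 * l 0 + 1 := by rw [firstVal, if_neg hD, if_pos hE]
          have hpre' : ∀ j, j < k → l j = pat (l 0) 1 j := fun j hj => hpre'' j (by omega)
          have hvk' : firstVal (fun i => l (k+i)) < 2 * l 0 + 1 := by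
            rw [hfvrest k]
            rcases (show j₀ % 2 = 0 ∨ j₀ % 2 = 1 by omega) with hpar | hpar
            · have hkj : k = j₀ := by omega
              have hle : l k ≤ l 0 := by
                have h2 := hbip (k-2)
                rw [show k-2+2 = k by omega] at h2
                rw [hpre' (k-2) (by omega)] at h2
                simp only [pat] at h2
                rw [if_pos (by omega)] at h2
                exact h2
              have hne : l k ≠ l 0 := by
                rw [hkj]
                intro h
                refine hj₀S ?_
                simp only [pat]
                rw [if_pos (by omega)]
                exact h
              split_ifs with g1 g2 <;> omega
            · have hkj : k = j₀ - 1 := by omega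
              have hlkeq : l k = l 0 := by
                rw [hpre'' k (by omega)]
                simp only [pat]
                rw [if_pos (by omega)]
              have hne1 : l (k+1) ≠ l 0 + 1 := by
                have e : k + 1 = j₀ := by omega
                rw [e]
                intro h
                refine hj₀S ?_
                simp only [pat]
                rw [if_neg (by omega)]
                exact h
              have hup : l (k+1) ≤ l 0 + 1 := by
                have h2 := hbip (k-1)
                rw [show k-1+2 = k+1 by omega] at h2
                rw [hpre' (k-1) (by omega)] at h2
                simp only [pat] at h2
                rw [if_neg (by omega)] at h2
                exact h2
              split_ifs with g1 g2 <;> omega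
          refine assemble ih ⟨hzl, hbip, hexc⟩ hf hz0 (by rw [hfveq]; omega)
            (by rw [hfleq]; omega) (by rw [hfleq, hfveq]; exact hvk')
            (fun _ => by rw [hfleq]; exact hkE) ?_
          intro j hj
          rw [hfleq] at hj
          rw [hfleq, hfveq, hpre' j hj]
          unfold blockVal
          rw [if_pos (by omega)]
          simp only [pat]
          split_ifs <;> omega
        · -- C-type first block
          have hl0 : 0 < l 0 := by
            rcases Nat.eq_zero_or_pos (l 0) with h | h
            · exact absurd ⟨h, by have h2 : l 1 ≤ l 0 + 2 := hexc 0; omega⟩ hz0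
            · exact h
          have hSne : {j | l j ≠ l 0}.Nonempty := by
            obtain ⟨N, hN⟩ := hzl
            refine ⟨N, ?_⟩
            simp only [Set.mem_setOf_eq]
            rw [hN N le_rfl]
            omega
          set k := sInf {j | l j ≠ l 0} with hkdef
          have hkS : l k ≠ l 0 := Nat.sInf_mem hSne
          have hpre' : ∀ j, j < k → l j = l 0 := by
            intro j hj
            by_contra h
            have h2 : k ≤ j := Nat.sInf_le h
            omega
          have hk0 : 0 < k := by
            rcases Nat.eq_zero_or_pos k with h | h
            · rw [h] at hkS
              omega
            · exact h
          have hfveq : firstVal l = 2 * l 0 := by rw [firstVal, if_neg hD, if_neg hE]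
          have hfleq : firstLen l = k := by rw [firstLen, if_neg hD, if_neg hE]
          have hlk : l k < l 0 := by
            rcases Nat.lt_or_ge k 2 with h | h
            · have hk1 : k = 1 := by omega
              have he : l 1 ≤ l 0 + 2 := hexc 0
              rw [hk1] at hkS ⊢
              omega
            · have h2 := hbip (k-2)
              rw [show k-2+2 = k by omega] at h2
              rw [hpre' (k-2) (by omega)] at h2
              omega
          have hup : l (k+1) ≤ l 0 := by
            have h2 := hbip (k-1)
            rw [show k-1+2 = k+1 by omega] at h2
            rw [hpre' (k-1) (by omega)] at h2
            exact h2
          have hvk' : firstVal (fun i => l (k+i)) < 2 * l 0 := by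
            rw [hfvrest k]
            split_ifs with g1 g2 <;> omega
          refine assemble ih ⟨hzl, hbip, hexc⟩ hf hz0 (by rw [hfveq]; omega)
            (by rw [hfleq]; omega) (by rw [hfleq, hfveq]; exact hvk')
            (fun h => by rw [hfveq] at h; omega) ?_
          intro j hj
          rw [hfleq] at hj
          rw [hfleq, hfveq, hpre' j hj]
          have hct : Odd k ∨ decide (2 * l 0 % 2 = 0 ∧ k % 2 = 0 ∧ l 1 ≠ l 0 + 2) = true := by
            rcases Nat.even_or_odd k with he | ho
            · exact Or.inr (decide_eq_true ⟨by omega, Nat.even_iff.1 he, hD⟩)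
            · exact Or.inl ho
          unfold blockVal
          rw [if_neg (by omega), if_pos hct]
          omega

end Z2BP

namespace Z2BP

lemma sum_ext {f : ℕ → ℕ} {M M' : ℕ} (h : ∀ j, M ≤ j → f j = 0) (hle : M ≤ M') :
    ∑ j ∈ Finset.range M', f j = ∑ j ∈ Finset.range M, f j := by
  rw [Finset.range_eq_Ico, ← Finset.sum_Ico_consecutive _ (Nat.zero_le M) hle,
    ← Finset.range_eq_Ico]
  have h0 : ∑ j ∈ Finset.Ico M M', f j = 0 := by
    apply Finset.sum_eq_zero
    intro j hj
    rw [Finset.mem_Ico] at hj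
    exact h j hj.1
  omega

end Z2BP


/-- 3.4(b): for even N, the substitution is a bijection from Z²_N (labelled
partitions) onto BP^{N/2}_{2,2}. -/
theorem Z2_bij_BP22 (N : ℕ) (hN : Even N) :
    Set.BijOn T3
      {p : (ℕ → ℕ) × (ℕ → Bool) |
        IsPartitionSeq p.1 ∧ SumsTo p.1 N ∧ OddPartsEvenMult p.1 ∧ LabelOk p.1 p.2}
      {l | IsBipartition l ∧ SumsTo l (N / 2) ∧ HasExcess 2 2 l} := by
  classical
  apply Set.InvOn.bijOn (f' := Z2BP.U)
  · constructor
    · -- left inverse on the source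
      intro p hp
      simp only [Set.mem_setOf_eq] at hp
      obtain ⟨h1, h2, h3, h4⟩ := hp
      have hG : Z2BP.GoodP p := ⟨h1, h3, h4⟩
      exact Z2BP.U_T3 (Z2BP.firstVal (T3 p) + 1) p hG (by omega)
    · -- right inverse on the target
      intro l hl
      simp only [Set.mem_setOf_eq] at hl
      obtain ⟨⟨hz, hbip⟩, hsum, hexc⟩ := hl
      have hGL : Z2BP.GoodL l := ⟨hz, hbip, fun i => by
        rcases Nat.even_or_odd i with h | h
        · exact (hexc i).1 h
        · exact (hexc i).2 h⟩
      exact (Z2BP.T3_U (Z2BP.firstVal l + 1) l hGL (by omega)).2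
  · -- T3 maps source into target
    intro p hp
    simp only [Set.mem_setOf_eq] at hp ⊢
    obtain ⟨h1, h2, h3, h4⟩ := hp
    have hG : Z2BP.GoodP p := ⟨h1, h3, h4⟩
    obtain ⟨M, hM1, hM2⟩ := h2
    refine ⟨⟨⟨M, fun m hm => Z2BP.T3_zero (hM1 m hm)⟩, Z2BP.T3_bip hG⟩, ?_, ?_⟩
    · refine ⟨M, fun m hm => Z2BP.T3_zero (hM1 m hm), ?_⟩
      have hs := Z2BP.sum_all hG hM1
      omega
    · intro i
      exact ⟨fun _ => Z2BP.T3_exc hG i, fun _ => Z2BP.T3_exc hG i⟩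
  · -- U maps target into source
    intro l hl
    simp only [Set.mem_setOf_eq] at hl ⊢
    obtain ⟨⟨hz, hbip⟩, hsum, hexc⟩ := hl
    have hGL : Z2BP.GoodL l := ⟨hz, hbip, fun i => by
      rcases Nat.even_or_odd i with h | h
      · exact (hexc i).1 h
      · exact (hexc i).2 h⟩
    obtain ⟨hG0, hT0⟩ := Z2BP.T3_U (Z2BP.firstVal l + 1) l hGL (by omega)
    have hG : Z2BP.GoodP (Z2BP.U l) := hG0
    have hT : T3 (Z2BP.U l) = l := hT0
    refine ⟨hG.1, ?_, hG.2.1, hG.2.2⟩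
    obtain ⟨M₁, hM1, hM2⟩ := hsum
    obtain ⟨M₂, hM3⟩ := hG.1.1
    set M := max M₁ M₂ with hMdef
    have htail : ∀ j, M ≤ j → (Z2BP.U l).1 j = 0 := fun j hj => hM3 j (by omega)
    refine ⟨M, htail, ?_⟩
    have hs := Z2BP.sum_all hG htail
    have he1 : ∑ j ∈ Finset.range M, T3 (Z2BP.U l) j = ∑ j ∈ Finset.range M, l j := by
      apply Finset.sum_congr rfl
      intro j _
      rw [hT]
    have he2 : ∑ j ∈ Finset.range M, l j = ∑ j ∈ Finset.range M₁, l j :=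
      Z2BP.sum_ext hM1 (by omega)
    obtain ⟨t, ht⟩ := hN
    have hNd : N / 2 = t := by omega
    rw [he1, he2, hM2, hNd] at hs
    omega
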